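/- Monotonicity of the quadratic relative entropy: for a completely positive trace-preserving map φ and positive definite density matrices P, Q with φ(P) positive definite, Tr((φ(Q)−φ(P)) φ(P)^{-1} (φ(Q)−φ(P))) ≤ Tr((Q−P) P^{-1}(Q−P)). -/

import Mathlib

open Matrix
open scoped ComplexOrder

lemma psd_trace_nonneg {k : ℕ} {M : Matrix (Fin k) (Fin k) ℂ}
    (hM : M.PosSemidef) : 0 ≤ M.trace := by
  rw [Matrix.trace]
  apply Finset.sum_nonneg
  intro i _
  exact hM.diag_nonneg

lemma psd_sum {α : Type*} [Fintype α] [DecidableEq α] {N : ℕ}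
    (f : Fin N → Matrix α α ℂ)
    (hf : ∀ i, (f i).PosSemidef) : (∑ i, f i).PosSemidef := by
  classical
  refine Finset.sum_induction f Matrix.PosSemidef (fun a b ha hb => ha.add hb)
    (Matrix.PosSemidef.zero) (fun i _ => hf i)

lemma sum_fromBlocks {a b N : ℕ} (A : Fin N → Matrix (Fin a) (Fin a) ℂ)
    (B : Fin N → Matrix (Fin a) (Fin b) ℂ) (C : Fin N → Matrix (Fin b) (Fin a) ℂ)
    (D : Fin N → Matrix (Fin b) (Fin b) ℂ) :
    ∑ k, Matrix.fromBlocks (A k) (B k) (C k) (D k) =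
      Matrix.fromBlocks (∑ k, A k) (∑ k, B k) (∑ k, C k) (∑ k, D k) := by
  ext i j
  cases i <;> cases j <;> simp [Matrix.fromBlocks, Matrix.sum_apply]

/-- Monotonicity of the quadratic relative entropy under a completely positive
trace-preserving map `φ(X) = Σ_k V_k X V_kᴴ` (with `Σ V_kᴴ V_k = 1`):
`Tr ((φ(Q)−φ(P)) φ(P)⁻¹ (φ(Q)−φ(P))) ≤ Tr ((Q−P) P⁻¹ (Q−P))`. -/
theorem quadratic_relative_entropy_monotone {n m N : ℕ}
    (V : Fin N → Matrix (Fin m) (Fin n) ℂ)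
    (hTP : ∑ k, (V k)ᴴ * V k = 1)
    (φ : Matrix (Fin n) (Fin n) ℂ → Matrix (Fin m) (Fin m) ℂ)
    (hφ : ∀ X, φ X = ∑ k, V k * X * (V k)ᴴ)
    (P Q : Matrix (Fin n) (Fin n) ℂ) (hP : P.PosDef) (hQ : Q.PosDef)
    (hPtr : P.trace = 1) (hQtr : Q.trace = 1)
    (hφP : (φ P).PosDef) :
    ((φ Q - φ P) * (φ P)⁻¹ * (φ Q - φ P)).trace ≤
      ((Q - P) * P⁻¹ * (Q - P)).trace := by
  classical
  set A : Matrix (Fin n) (Fin n) ℂ := Q - P with hAdef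
  have hAH : Aᴴ = A := by
    simp [hAdef, Matrix.conjTranspose_sub, hP.1.eq, hQ.1.eq]
  have hPinvertible : Invertible P := hP.isUnit.invertible
  have hφPinvertible : Invertible (φ P) := hφP.isUnit.invertible
  -- the base block matrix is PSD
  have hM : (Matrix.fromBlocks P A Aᴴ (Aᴴ * P⁻¹ * A)).PosSemidef := by
    rw [Matrix.PosDef.fromBlocks₁₁ A (Aᴴ * P⁻¹ * A) hP]
    simpa using Matrix.PosSemidef.zero
  -- φ applied blockwise preserves PSD
  have hφA : φ A = φ Q - φ P := by
    simp only [hφ, hAdef, Matrix.sub_mul, Matrix.mul_sub, Finset.sum_sub_distrib]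
  have key : (Matrix.fromBlocks (φ P) (φ A) (φ A)ᴴ (φ (Aᴴ * P⁻¹ * A))).PosSemidef := by
    have hφAH : (φ A)ᴴ = φ Aᴴ := by
      simp only [hφ, Matrix.conjTranspose_sum, Matrix.conjTranspose_mul,
        Matrix.conjTranspose_conjTranspose, Matrix.mul_assoc]
    have heq : (Matrix.fromBlocks (φ P) (φ A) (φ A)ᴴ (φ (Aᴴ * P⁻¹ * A)))
        = ∑ k, (Matrix.fromBlocks (V k) 0 0 (V k)) *
            (Matrix.fromBlocks P A Aᴴ (Aᴴ * P⁻¹ * A)) *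
            (Matrix.fromBlocks (V k) 0 0 (V k))ᴴ := by
      have : ∀ k, (Matrix.fromBlocks (V k) 0 0 (V k)) *
            (Matrix.fromBlocks P A Aᴴ (Aᴴ * P⁻¹ * A)) *
            (Matrix.fromBlocks (V k) 0 0 (V k))ᴴ
          = Matrix.fromBlocks (V k * P * (V k)ᴴ) (V k * A * (V k)ᴴ)
              (V k * Aᴴ * (V k)ᴴ) (V k * (Aᴴ * P⁻¹ * A) * (V k)ᴴ) := by
        intro k
        simp [Matrix.fromBlocks_multiply, Matrix.fromBlocks_conjTranspose,
          Matrix.mul_assoc]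
      rw [Finset.sum_congr rfl fun k _ => this k, sum_fromBlocks]
      rw [hφAH]
      simp only [hφ]
    rw [heq]
    exact psd_sum _ fun k => hM.mul_mul_conjTranspose_same _
  -- Schur complement for the image
  have hSchur : (φ (Aᴴ * P⁻¹ * A) - (φ A)ᴴ * (φ P)⁻¹ * (φ A)).PosSemidef := by
    rw [← Matrix.PosDef.fromBlocks₁₁ (φ A) (φ (Aᴴ * P⁻¹ * A)) hφP]
    exact key
  -- trace preservation
  have hTrPres : ∀ X : Matrix (Fin n) (Fin n) ℂ, (φ X).trace = X.trace := by
    intro X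
    rw [hφ, Matrix.trace_sum]
    have : ∀ k, (V k * X * (V k)ᴴ).trace = ((V k)ᴴ * V k * X).trace := by
      intro k
      rw [Matrix.trace_mul_comm, ← Matrix.mul_assoc]
    rw [Finset.sum_congr rfl fun k _ => this k, ← Matrix.trace_sum,
      ← Finset.sum_mul, hTP, Matrix.one_mul]
  have h0 : 0 ≤ (φ (Aᴴ * P⁻¹ * A)).trace - ((φ A)ᴴ * (φ P)⁻¹ * (φ A)).trace := by
    rw [← Matrix.trace_sub]
    exact psd_trace_nonneg hSchur
  have := sub_nonneg.mp h0
  calc ((φ Q - φ P) * (φ P)⁻¹ * (φ Q - φ P)).trace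
      = ((φ A)ᴴ * (φ P)⁻¹ * (φ A)).trace := by
        rw [hφA]
        congr 1
        rw [← hφA]
        congr 1
        rw [← hAH]
        simp [hφ, Matrix.conjTranspose_sum, Matrix.conjTranspose_mul,
          Matrix.mul_assoc, hAH]
    _ ≤ (φ (Aᴴ * P⁻¹ * A)).trace := this
    _ = (Aᴴ * P⁻¹ * A).trace := hTrPres _
    _ = ((Q - P) * P⁻¹ * (Q - P)).trace := by rw [hAH]
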